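/- (Single-preferred-spin model.) Suppose each vertex v_i of G carries a complex value z_i and the Hamiltonian is h(σ) = −Σ_{{i,j}∈E} J_{i,j} δ(σ_i, σ_j) − Σ_{v_i} z_i δ(1, σ_i). Then Z(G) = V(G, ω; {X_z}_{z∈ℂ}, {e^{β J_e} − 1}_{e∈E(G)}), where ω(v_i) = z_i and X_z = e^{βz} + q − 1. -/
import Mathlib


open Finset

structure WGraph (S : Type) (L : Type) where
  V : Type
  E : Type
  [fV : Fintype V]
  [dV : DecidableEq V]
  [fE : Fintype E]
  [dE : DecidableEq E]
  ends : E → V × V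
  ω : V → S
  γ : E → L

attribute [instance] WGraph.fV WGraph.dV WGraph.fE WGraph.dE

namespace WGraph
variable {S L : Type}

def IsLoop (G : WGraph S L) (e : G.E) : Prop := (G.ends e).1 = (G.ends e).2

def delete (G : WGraph S L) (e₀ : G.E) : WGraph S L where
  V := G.V
  E := {e : G.E // e ≠ e₀}
  ends := fun e => G.ends e.1
  ω := G.ω
  γ := fun e => G.γ e.1

def contract [Add S] (G : WGraph S L) (e₀ : G.E) (h : ¬ G.IsLoop e₀) : WGraph S L where
  V := {v : G.V // v ≠ (G.ends e₀).2}
  E := {e : G.E // e ≠ e₀}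
  ends := fun e =>
    ((if hv : (G.ends e.1).1 = (G.ends e₀).2 then ⟨(G.ends e₀).1, h⟩
        else ⟨(G.ends e.1).1, hv⟩ : {v : G.V // v ≠ (G.ends e₀).2}),
     (if hv : (G.ends e.1).2 = (G.ends e₀).2 then ⟨(G.ends e₀).1, h⟩
        else ⟨(G.ends e.1).2, hv⟩))
  ω := fun v =>
    if v.1 = (G.ends e₀).1 then G.ω (G.ends e₀).1 + G.ω (G.ends e₀).2 else G.ω v.1
  γ := fun e => G.γ e.1

def mapEdges {L' : Type} (G : WGraph S L) (φ : L → L') : WGraph S L' where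
  V := G.V
  E := G.E
  ends := G.ends
  ω := G.ω
  γ := φ ∘ G.γ

def stateGraph (G : WGraph S L) (A : Finset G.E) : SimpleGraph G.V :=
  SimpleGraph.fromRel (fun v w => ∃ e ∈ A, G.ends e = (v, w))

noncomputable instance (G : WGraph S L) (A : Finset G.E) :
    Fintype (G.stateGraph A).ConnectedComponent := Fintype.ofFinite _

noncomputable def kcomp (G : WGraph S L) (A : Finset G.E) : ℕ :=
  Fintype.card (G.stateGraph A).ConnectedComponent

open scoped Classical in
noncomputable def compWeight [AddCommMonoid S] (G : WGraph S L) (A : Finset G.E)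
    (c : (G.stateGraph A).ConnectedComponent) : S :=
  ∑ v ∈ Finset.univ.filter (fun v => (G.stateGraph A).connectedComponentMk v = c), G.ω v

end WGraph

section Aux
variable (q : ℕ) (hq : 0 < q) (β : ℂ)

noncomputable def Zp (G : WGraph ℂ ℂ) : ℂ :=
  ∑ σ : G.V → Fin q,
    (∏ e : G.E, Complex.exp (β * (G.γ e * (if σ (G.ends e).1 = σ (G.ends e).2 then 1 else 0)))) *
    (∏ v : G.V, Complex.exp (β * (G.ω v * (if σ v = (⟨0, hq⟩ : Fin q) then 1 else 0))))

lemma Zp_empty (G : WGraph ℂ ℂ) (hE : IsEmpty G.E) :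
    Zp q hq β G = ∏ v : G.V, (Complex.exp (β * G.ω v) + (q : ℂ) - 1) := by
  haveI := hE
  unfold Zp
  simp only [Finset.univ_eq_empty (α := G.E), Finset.prod_empty, one_mul]
  rw [← Fintype.prod_sum (fun (v : G.V) (s : Fin q) =>
    Complex.exp (β * (G.ω v * (if s = (⟨0, hq⟩ : Fin q) then 1 else 0))))]
  refine Finset.prod_congr rfl fun v _ => ?_
  rw [← Finset.add_sum_erase _ _ (Finset.mem_univ (⟨0, hq⟩ : Fin q))]
  rw [if_pos rfl, mul_one]
  rw [Finset.sum_congr rfl (fun s hs => by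
    rw [if_neg (Finset.mem_erase.mp hs).1, mul_zero, mul_zero, Complex.exp_zero])]
  rw [Finset.sum_const, Finset.card_erase_of_mem (Finset.mem_univ _), Finset.card_univ,
    Fintype.card_fin, nsmul_eq_mul, mul_one, Nat.cast_sub hq, Nat.cast_one]
  ring

lemma Zp_loop (G : WGraph ℂ ℂ) (e : G.E) (he : G.IsLoop e) :
    Zp q hq β G = Complex.exp (β * G.γ e) * Zp q hq β (G.delete e) := by
  unfold Zp
  rw [Finset.mul_sum]
  refine Finset.sum_congr rfl fun σ _ => ?_
  rw [← mul_assoc]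
  congr 1
  rw [← Finset.mul_prod_erase Finset.univ _ (Finset.mem_univ e), if_pos (congrArg σ he), mul_one]
  congr 1
  rw [Finset.prod_subtype (Finset.univ.erase e) (p := fun e' => e' ≠ e) (by simp)]
  rfl
end Aux

section Aux2
variable (q : ℕ) (hq : 0 < q) (β : ℂ)

lemma Zp_nonloop (G : WGraph ℂ ℂ) (e : G.E) (h : ¬ G.IsLoop e) :
    Zp q hq β G = Zp q hq β (G.delete e)
      + (Complex.exp (β * G.γ e) - 1) * Zp q hq β (G.contract e h) := by
  classical
  set c : ℂ := Complex.exp (β * G.γ e) with hc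
  -- abbreviations
  have hsplit : ∀ σ : G.V → Fin q,
      (∏ e' : G.E,
        Complex.exp (β * (G.γ e' * (if σ (G.ends e').1 = σ (G.ends e').2 then 1 else 0))))
      = (1 + (c - 1) * (if σ (G.ends e).1 = σ (G.ends e).2 then 1 else 0)) *
        ∏ e' : {e' : G.E // e' ≠ e},
          Complex.exp (β * (G.γ e'.1 * (if σ (G.ends e'.1).1 = σ (G.ends e'.1).2 then 1 else 0))) := by
    intro σ
    rw [← Finset.mul_prod_erase Finset.univ _ (Finset.mem_univ e)]
    congr 1
    · by_cases hσ : σ (G.ends e).1 = σ (G.ends e).2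
      · simp only [if_pos hσ, mul_one]; rw [hc]; ring
      · simp only [if_neg hσ, mul_zero, Complex.exp_zero, add_zero]
    · exact Finset.prod_subtype (Finset.univ.erase e) (p := fun e' => e' ≠ e) (by simp) _
  unfold Zp
  simp only [hsplit]
  have expand : ∀ σ : G.V → Fin q, ∀ P Q : ℂ,
      (1 + (c - 1) * (if σ (G.ends e).1 = σ (G.ends e).2 then 1 else 0)) * P * Q
      = P * Q + (c - 1) * (if σ (G.ends e).1 = σ (G.ends e).2 then P * Q else 0) := by
    intro σ P Q
    by_cases hσ : σ (G.ends e).1 = σ (G.ends e).2 <;> simp [hσ] <;> ring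
  rw [Finset.sum_congr rfl (fun σ _ => expand σ _ _), Finset.sum_add_distrib, ← Finset.mul_sum,
    ← Finset.sum_filter]
  congr 1
  congr 1
  -- the constrained sum equals Zp of the contraction
  refine Finset.sum_nbij'
    (i := fun (σ : G.V → Fin q) (v : {v : G.V // v ≠ (G.ends e).2}) => σ v.1)
    (j := fun (σ' : {v : G.V // v ≠ (G.ends e).2} → Fin q) (v : G.V) =>
      if hv : v = (G.ends e).2 then σ' ⟨(G.ends e).1, h⟩ else σ' ⟨v, hv⟩)
    ?_ ?_ ?_ ?_ ?_
  · intro σ _; exact Finset.mem_univ _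
  · intro σ' _
    have h' : (G.ends e).1 ≠ (G.ends e).2 := h
    simp only [Finset.mem_filter, Finset.mem_univ, true_and]
    simp [h']
  · intro σ hσ
    simp only [Finset.mem_filter, Finset.mem_univ, true_and] at hσ
    funext v
    by_cases hv : v = (G.ends e).2
    · simp only [dif_pos hv]
      rw [hv]; exact hσ
    · simp only [dif_neg hv]
  · intro σ' _
    funext v
    simp only [dif_neg v.2]
  · intro σ hσ
    simp only [Finset.mem_filter, Finset.mem_univ, true_and] at hσ
    have hval : ∀ x : G.V,
        σ ((if hv : x = (G.ends e).2 then (⟨(G.ends e).1, h⟩ : {v : G.V // v ≠ (G.ends e).2})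
            else ⟨x, hv⟩) : {v : G.V // v ≠ (G.ends e).2}).1 = σ x := by
      intro x
      by_cases hv : x = (G.ends e).2
      · simp only [dif_pos hv]
        rw [hv]; exact hσ
      · simp only [dif_neg hv]
    dsimp only
    congr 1
    · refine Finset.prod_congr rfl fun e' _ => ?_
      show _ = Complex.exp (β * ((G.contract e h).γ e' *
        (if σ ((G.contract e h).ends e').1.1 = σ ((G.contract e h).ends e').2.1 then 1 else 0)))
      simp only [WGraph.contract]
      simp only [hval]
    · -- vertex products
      show (∏ v : G.V,
          Complex.exp (β * (G.ω v * (if σ v = (⟨0, hq⟩ : Fin q) then 1 else 0))))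
        = ∏ v : {v : G.V // v ≠ (G.ends e).2},
          Complex.exp (β * ((if v.1 = (G.ends e).1 then G.ω (G.ends e).1 + G.ω (G.ends e).2
              else G.ω v.1) * (if σ v.1 = (⟨0, hq⟩ : Fin q) then 1 else 0)))
      have step : ∀ v : {v : G.V // v ≠ (G.ends e).2},
          Complex.exp (β * ((if v.1 = (G.ends e).1 then G.ω (G.ends e).1 + G.ω (G.ends e).2
              else G.ω v.1) * (if σ v.1 = (⟨0, hq⟩ : Fin q) then 1 else 0)))
          = Complex.exp (β * (G.ω v.1 * (if σ v.1 = (⟨0, hq⟩ : Fin q) then 1 else 0))) *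
            (if v = (⟨(G.ends e).1, h⟩ : {v : G.V // v ≠ (G.ends e).2}) then
              Complex.exp (β * (G.ω (G.ends e).2 *
                (if σ (G.ends e).2 = (⟨0, hq⟩ : Fin q) then 1 else 0))) else 1) := by
        intro v
        by_cases hv : v = (⟨(G.ends e).1, h⟩ : {v : G.V // v ≠ (G.ends e).2})
        · have hv1 : v.1 = (G.ends e).1 := by rw [hv]
          rw [if_pos hv, if_pos hv1, hv1, add_mul, mul_add, Complex.exp_add, hσ]
        · have hv1 : v.1 ≠ (G.ends e).1 := fun hh => hv (Subtype.ext hh)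
          rw [if_neg hv, if_neg hv1, mul_one]
      rw [Finset.prod_congr rfl (fun v _ => step v), Finset.prod_mul_distrib,
        Finset.prod_ite_eq' Finset.univ (⟨(G.ends e).1, h⟩ : {v : G.V // v ≠ (G.ends e).2}),
        if_pos (Finset.mem_univ _)]
      rw [← Finset.prod_subtype (Finset.univ.erase (G.ends e).2)
        (p := fun v => v ≠ (G.ends e).2) (by simp)
        (f := fun x => Complex.exp (β * (G.ω x * (if σ x = (⟨0, hq⟩ : Fin q) then 1 else 0))))]
      rw [Finset.prod_erase_mul Finset.univ _ (Finset.mem_univ (G.ends e).2)]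
end Aux2

/-- single-preferred-spin model: with Hamiltonian
`h(σ) = -Σ J_{ij} δ(σ_i,σ_j) - Σ_i z_i δ(1,σ_i)`, the partition function is the evaluation of
the V-polynomial with complex vertex weights `ω(v_i) = z_i`, variables `x_z = e^{βz}+q-1`,
and edge weights `e^{βJ_e}-1`. -/
theorem pottsZ_single_spin_eq_V (q : ℕ) (hq : 0 < q) (β : ℂ)
    (Vpoly : WGraph ℂ ℂ → ℂ)
    (hV1 : ∀ (G : WGraph ℂ ℂ) (e : G.E) (h : ¬ G.IsLoop e),
      Vpoly G = Vpoly (G.delete e) + G.γ e * Vpoly (G.contract e h))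
    (hV2 : ∀ (G : WGraph ℂ ℂ) (e : G.E), G.IsLoop e →
      Vpoly G = (G.γ e + 1) * Vpoly (G.delete e))
    (hV3 : ∀ G : WGraph ℂ ℂ, IsEmpty G.E →
      Vpoly G = ∏ v : G.V, (Complex.exp (β * G.ω v) + (q : ℂ) - 1)) :
    ∀ G : WGraph ℂ ℂ,
      (∑ σ : G.V → Fin q, Complex.exp (-β *
        (-(∑ e : G.E, G.γ e * (if σ (G.ends e).1 = σ (G.ends e).2 then 1 else 0))
          - ∑ v : G.V, G.ω v * (if σ v = (⟨0, hq⟩ : Fin q) then 1 else 0)))) =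
      Vpoly (G.mapEdges (fun J => Complex.exp (β * J) - 1)) := by
  intro G
  have key : ∀ n : ℕ, ∀ G : WGraph ℂ ℂ, Fintype.card G.E ≤ n →
      Zp q hq β G = Vpoly (G.mapEdges (fun J => Complex.exp (β * J) - 1)) := by
    intro n
    induction n with
    | zero =>
      intro G hcard
      haveI hE : IsEmpty G.E := Fintype.card_eq_zero_iff.mp (Nat.le_zero.mp hcard)
      rw [Zp_empty q hq β G hE, hV3 (G.mapEdges _) hE]
      rfl
    | succ n ih =>
      intro G hcard
      by_cases hE : IsEmpty G.E
      · rw [Zp_empty q hq β G hE, hV3 (G.mapEdges _) hE]; rfl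
      · obtain ⟨e⟩ := not_isEmpty_iff.mp hE
        have hlt : Fintype.card {e' : G.E // e' ≠ e} < Fintype.card G.E :=
          Fintype.card_subtype_lt (x := e) (by simp)
        have hcard' : Fintype.card {e' : G.E // e' ≠ e} ≤ n := by omega
        by_cases hloop : G.IsLoop e
        · rw [Zp_loop q hq β G e hloop, ih (G.delete e) hcard',
            hV2 (G.mapEdges _) e hloop]
          have h1 : (G.mapEdges (fun J => Complex.exp (β * J) - 1)).delete e
              = (G.delete e).mapEdges (fun J => Complex.exp (β * J) - 1) := rfl
          rw [h1]
          have hγ : (G.mapEdges (fun J => Complex.exp (β * J) - 1)).γ e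
              = Complex.exp (β * G.γ e) - 1 := rfl
          rw [hγ]; ring
        · rw [Zp_nonloop q hq β G e hloop, ih (G.delete e) hcard',
            ih (G.contract e hloop) hcard', hV1 (G.mapEdges _) e hloop]
          have h1 : (G.mapEdges (fun J => Complex.exp (β * J) - 1)).delete e
              = (G.delete e).mapEdges (fun J => Complex.exp (β * J) - 1) := rfl
          have h2 : (G.mapEdges (fun J => Complex.exp (β * J) - 1)).contract e hloop
              = (G.contract e hloop).mapEdges (fun J => Complex.exp (β * J) - 1) := rfl
          rw [h1, h2]
          rfl
  have hZ : (∑ σ : G.V → Fin q, Complex.exp (-β *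
        (-(∑ e : G.E, G.γ e * (if σ (G.ends e).1 = σ (G.ends e).2 then 1 else 0))
          - ∑ v : G.V, G.ω v * (if σ v = (⟨0, hq⟩ : Fin q) then 1 else 0))))
      = Zp q hq β G := by
    unfold Zp
    refine Finset.sum_congr rfl fun σ _ => ?_
    rw [← Complex.exp_sum, ← Complex.exp_sum, ← Complex.exp_add]
    congr 1
    rw [← Finset.mul_sum, ← Finset.mul_sum]
    ring
  rw [hZ, key (Fintype.card G.E) G le_rfl]
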